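/- Let μ and λ be probability measures with μ ≪ λ. Then the χ² divergence satisfies χ²(μ | λ) ≥ e^{KL(μ | λ)} − 1, where KL(μ|λ) = ∫ log(dμ/dλ) dμ. -/

import Mathlib

open MeasureTheory Real

theorem chi_sq_ge_exp_KL_sub_one {Ω : Type*} [MeasurableSpace Ω]
    (μ lam : Measure Ω) [IsProbabilityMeasure μ] [IsProbabilityMeasure lam]
    (hac : μ ≪ lam)
    (hInt2 : Integrable (fun x => ((μ.rnDeriv lam x).toReal) ^ 2) lam)
    (hIntlog : Integrable (fun x => Real.log ((μ.rnDeriv lam x).toReal)) μ) :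
    Real.exp (∫ x, Real.log ((μ.rnDeriv lam x).toReal) ∂μ) - 1
      ≤ (∫ x, ((μ.rnDeriv lam x).toReal) ^ 2 ∂lam) - 1 := by
  set f : Ω → ℝ := fun x => (μ.rnDeriv lam x).toReal with hf
  -- f > 0 μ-a.e.
  have hpos : ∀ᵐ x ∂μ, 0 < f x := by
    filter_upwards [Measure.rnDeriv_pos hac, hac.ae_le (Measure.rnDeriv_lt_top μ lam)]
      with x h1 h2
    exact ENNReal.toReal_pos h1.ne' h2.ne
  -- f integrable w.r.t. μ
  have hfint : Integrable f μ := by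
    rw [← MeasureTheory.integrable_rnDeriv_smul_iff hac]
    simpa [hf, smul_eq_mul, ← sq] using hInt2
  -- exp ∘ log ∘ f = f a.e. μ
  have hcongr : (fun x => Real.exp (Real.log (f x))) =ᵐ[μ] f := by
    filter_upwards [hpos] with x hx using Real.exp_log hx
  -- ∫ f dμ = ∫ f² dλ
  have hswap : ∫ x, f x ∂μ = ∫ x, (f x) ^ 2 ∂lam := by
    rw [← MeasureTheory.integral_rnDeriv_smul hac (f := f)]
    simp [hf, smul_eq_mul, ← sq]
  -- Jensen
  have hJ : Real.exp (∫ x, Real.log (f x) ∂μ) ≤ ∫ x, Real.exp (Real.log (f x)) ∂μ := by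
    refine (convexOn_exp).map_integral_le continuous_exp.continuousOn isClosed_univ ?_
      hIntlog ?_
    · exact Filter.Eventually.of_forall fun x => Set.mem_univ _
    · exact hfint.congr hcongr.symm
  have : Real.exp (∫ x, Real.log (f x) ∂μ) ≤ ∫ x, (f x) ^ 2 ∂lam := by
    calc Real.exp (∫ x, Real.log (f x) ∂μ) ≤ ∫ x, Real.exp (Real.log (f x)) ∂μ := hJ
      _ = ∫ x, f x ∂μ := integral_congr_ae hcongr
      _ = ∫ x, (f x) ^ 2 ∂lam := hswap
  linarith
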